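/- The set U = {(a,b) ∈ S¹ × S¹ | b ≠ -a} admits a continuous local section of the path evaluation map, given by 'follow the shortest geodesic arc from a to b'. -/

import Mathlib

open Set

abbrev S1 : Set (ℝ × ℝ) := {p | p.1 ^ 2 + p.2 ^ 2 = 1}

lemma chord_ne_zero {a b : ℝ × ℝ} (ha : a.1 ^ 2 + a.2 ^ 2 = 1)
    (hb : b.1 ^ 2 + b.2 ^ 2 = 1) (hab : b ≠ -a) {t : ℝ} (ht0 : 0 ≤ t) (ht1 : t ≤ 1) :
    (1 - t) • a + t • b ≠ 0 := by
  intro h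
  have h1 : (1 - t) * a.1 + t * b.1 = 0 := congrArg Prod.fst h
  have h2 : (1 - t) * a.2 + t * b.2 = 0 := congrArg Prod.snd h
  have e1 : (1 - t) * a.1 = -(t * b.1) := by linarith
  have e2 : (1 - t) * a.2 = -(t * b.2) := by linarith
  have k1 : ((1 - t) * a.1) ^ 2 = (t * b.1) ^ 2 := by rw [e1]; ring
  have k2 : ((1 - t) * a.2) ^ 2 = (t * b.2) ^ 2 := by rw [e2]; ring
  have hsq : (1 - t) ^ 2 = t ^ 2 := by nlinarith [k1, k2, ha, hb]
  have ht : t = 1 / 2 := by nlinarith [hsq]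
  apply hab
  have hb1 : b.1 = -a.1 := by rw [ht] at h1; linarith
  have hb2 : b.2 = -a.2 := by rw [ht] at h2; linarith
  exact Prod.ext hb1 hb2

lemma norm2_pos {c : ℝ × ℝ} (hc : c ≠ 0) : 0 < c.1 ^ 2 + c.2 ^ 2 := by
  rcases eq_or_ne c.1 0 with h1 | h1
  · rcases eq_or_ne c.2 0 with h2 | h2
    · exact absurd (Prod.ext h1 h2) hc
    · positivity
  · positivity

lemma arc_mem {c : ℝ × ℝ} (hc : c ≠ 0) :
    ((Real.sqrt (c.1 ^ 2 + c.2 ^ 2))⁻¹ • c) ∈ S1 := by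
  have hpos := norm2_pos hc
  have hs : Real.sqrt (c.1 ^ 2 + c.2 ^ 2) ^ 2 = c.1 ^ 2 + c.2 ^ 2 :=
    Real.sq_sqrt hpos.le
  have hsne : Real.sqrt (c.1 ^ 2 + c.2 ^ 2) ≠ 0 :=
    (Real.sqrt_pos.mpr hpos).ne'
  show ((Real.sqrt (c.1 ^ 2 + c.2 ^ 2))⁻¹ * c.1) ^ 2 +
      ((Real.sqrt (c.1 ^ 2 + c.2 ^ 2))⁻¹ * c.2) ^ 2 = 1
  field_simp
  linarith [hs]

theorem shortest_path_section :
    ∃ s : ↥{p : ↥S1 × ↥S1 | (p.2 : ℝ × ℝ) ≠ -(p.1 : ℝ × ℝ)} → C(unitInterval, ↥S1),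
      Continuous s ∧
      (∀ p, s p 0 = (p : ↥S1 × ↥S1).1 ∧ s p 1 = (p : ↥S1 × ↥S1).2) ∧
      ∀ p, ∀ t : unitInterval,
        ((s p t : ℝ × ℝ)) =
          (Real.sqrt ((((1:ℝ) - t) • ((p : ↥S1 × ↥S1).1 : ℝ × ℝ) +
              (t : ℝ) • ((p : ↥S1 × ↥S1).2 : ℝ × ℝ)).1 ^ 2 +
            (((1:ℝ) - t) • ((p : ↥S1 × ↥S1).1 : ℝ × ℝ) +
              (t : ℝ) • ((p : ↥S1 × ↥S1).2 : ℝ × ℝ)).2 ^ 2))⁻¹ •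
          (((1:ℝ) - t) • ((p : ↥S1 × ↥S1).1 : ℝ × ℝ) +
            (t : ℝ) • ((p : ↥S1 × ↥S1).2 : ℝ × ℝ)) := by
  set U := {p : ↥S1 × ↥S1 | (p.2 : ℝ × ℝ) ≠ -(p.1 : ℝ × ℝ)}
  -- the chord map
  let c : ↥U → unitInterval → ℝ × ℝ := fun p t =>
    ((1 : ℝ) - t) • ((p : ↥S1 × ↥S1).1 : ℝ × ℝ) + (t : ℝ) • ((p : ↥S1 × ↥S1).2 : ℝ × ℝ)
  have hcne : ∀ p t, c p t ≠ 0 := fun p t =>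
    chord_ne_zero (p : ↥S1 × ↥S1).1.2 (p : ↥S1 × ↥S1).2.2 p.2 t.2.1 t.2.2
  let f : ↥U → unitInterval → ℝ × ℝ := fun p t =>
    (Real.sqrt ((c p t).1 ^ 2 + (c p t).2 ^ 2))⁻¹ • c p t
  have hcont_c : Continuous (fun q : ↥U × unitInterval => c q.1 q.2) := by
    apply Continuous.add
    · exact (continuous_const.sub (continuous_subtype_val.comp continuous_snd)).smul
        (continuous_subtype_val.comp <| continuous_fst.comp <|
          continuous_subtype_val.comp continuous_fst)
    · exact (continuous_subtype_val.comp continuous_snd).smul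
        (continuous_subtype_val.comp <| continuous_snd.comp <|
          continuous_subtype_val.comp continuous_fst)
  have hcontf : Continuous (fun q : ↥U × unitInterval => f q.1 q.2) := by
    refine Continuous.smul (f := fun q : ↥U × unitInterval =>
      (Real.sqrt ((c q.1 q.2).1 ^ 2 + (c q.1 q.2).2 ^ 2))⁻¹) (g := fun q => c q.1 q.2) ?_ ?_
    · apply Continuous.inv₀
      · exact Real.continuous_sqrt.comp
          (((continuous_fst.comp hcont_c).pow 2).add ((continuous_snd.comp hcont_c).pow 2))
      · intro q
        exact (Real.sqrt_pos.mpr (norm2_pos (hcne q.1 q.2))).ne'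
    · exact hcont_c
  refine ⟨fun p => ⟨fun t => ⟨f p t, arc_mem (hcne p t)⟩, ?_⟩, ?_, ?_, ?_⟩
  · exact (hcontf.comp (Continuous.prodMk_right p)).subtype_mk _
  · exact ContinuousMap.continuous_of_continuous_uncurry _ (hcontf.subtype_mk _)
  · intro p
    have ha : ((p : ↥S1 × ↥S1).1 : ℝ × ℝ).1 ^ 2 + ((p : ↥S1 × ↥S1).1 : ℝ × ℝ).2 ^ 2 = 1 :=
      (p : ↥S1 × ↥S1).1.2
    have hb : ((p : ↥S1 × ↥S1).2 : ℝ × ℝ).1 ^ 2 + ((p : ↥S1 × ↥S1).2 : ℝ × ℝ).2 ^ 2 = 1 :=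
      (p : ↥S1 × ↥S1).2.2
    constructor
    · ext1
      show f p 0 = _
      have hc0 : c p 0 = ((p : ↥S1 × ↥S1).1 : ℝ × ℝ) := by
        simp [c]
      simp only [f, hc0, ha, Real.sqrt_one, inv_one, one_smul]
    · ext1
      show f p 1 = _
      have hc1 : c p 1 = ((p : ↥S1 × ↥S1).2 : ℝ × ℝ) := by
        simp [c]
      simp only [f, hc1, hb, Real.sqrt_one, inv_one, one_smul]
  · intro p t
    rfl
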